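/- Let K ≥ 2 be a natural number. Then (1/K) + (1/K)·∑_{t=1}^{2K-3} ∏_{j=1}^{t} (K − 1 − ⌊j/2⌋)/K ≤ 1/K + √(π/K). -/

import Mathlib

open Real MeasureTheory

lemma aux_sum_div2 (t : ℕ) : t ^ 2 ≤ 4 * ∑ j ∈ Finset.Icc 1 t, (1 + j / 2) := by
  induction t with
  | zero => simp
  | succ n ih =>
    rw [Finset.sum_Icc_succ_top (by omega)]
    have h2 : n ≤ 2 * ((n + 1) / 2) := by omega
    have := ih
    nlinarith [this, h2]

/-- For `K ≥ 2`,
`1/K + (1/K) ∑_{t=1}^{2K-3} ∏_{j=1}^{t} (K − 1 − ⌊j/2⌋)/K ≤ 1/K + √(π/K)`. -/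
theorem stmt_2 (K : ℕ) (hK : 2 ≤ K) :
    1 / (K : ℝ) + (1 / (K : ℝ)) *
        ∑ t ∈ Finset.Icc 1 (2 * K - 3),
          ∏ j ∈ Finset.Icc 1 t, ((K : ℝ) - 1 - ((j / 2 : ℕ) : ℝ)) / (K : ℝ)
      ≤ 1 / (K : ℝ) + Real.sqrt (Real.pi / (K : ℝ)) := by
  have hK0 : (0 : ℝ) < K := by exact_mod_cast (show 0 < K by omega)
  set N := 2 * K - 3 with hN
  set b : ℝ := 1 / (4 * K) with hb
  have hbpos : 0 < b := by positivity
  -- Step 1: pointwise product bound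
  have key : ∀ t ∈ Finset.Icc 1 N,
      (∏ j ∈ Finset.Icc 1 t, ((K : ℝ) - 1 - ((j / 2 : ℕ) : ℝ)) / (K : ℝ))
        ≤ Real.exp (-b * (t : ℝ) ^ 2) := by
    intro t ht
    rw [Finset.mem_Icc] at ht
    have prod_le : (∏ j ∈ Finset.Icc 1 t, ((K : ℝ) - 1 - ((j / 2 : ℕ) : ℝ)) / (K : ℝ))
        ≤ ∏ j ∈ Finset.Icc 1 t, Real.exp (-((1 + ((j / 2 : ℕ) : ℝ)) / K)) := by
      apply Finset.prod_le_prod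
      · intro j hj
        rw [Finset.mem_Icc] at hj
        have : j / 2 ≤ K - 2 := by omega
        have : ((j / 2 : ℕ) : ℝ) ≤ (K : ℝ) - 2 := by
          have h2 : ((j / 2 : ℕ) : ℝ) ≤ ((K - 2 : ℕ) : ℝ) := by exact_mod_cast this
          rwa [Nat.cast_sub hK] at h2
        have : (0 : ℝ) ≤ (K : ℝ) - 1 - ((j / 2 : ℕ) : ℝ) := by linarith
        positivity
      · intro j _
        have hrw : ((K : ℝ) - 1 - ((j / 2 : ℕ) : ℝ)) / (K : ℝ)
            = 1 - (1 + ((j / 2 : ℕ) : ℝ)) / K := by field_simp; ring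
        rw [hrw]
        have := Real.add_one_le_exp (-((1 + ((j / 2 : ℕ) : ℝ)) / K))
        linarith
    refine prod_le.trans ?_
    rw [← Real.exp_sum]
    apply Real.exp_le_exp.2
    have hcast : ∑ j ∈ Finset.Icc 1 t, (1 + ((j / 2 : ℕ) : ℝ))
        = ((∑ j ∈ Finset.Icc 1 t, (1 + j / 2) : ℕ) : ℝ) := by
      push_cast; ring
    have hreal : (t : ℝ) ^ 2 ≤ 4 * ((∑ j ∈ Finset.Icc 1 t, (1 + j / 2) : ℕ) : ℝ) := by
      exact_mod_cast aux_sum_div2 t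
    have e1 : ∑ x ∈ Finset.Icc 1 t, -((1 + ((x / 2 : ℕ) : ℝ)) / (K : ℝ))
        = -(((∑ j ∈ Finset.Icc 1 t, (1 + j / 2) : ℕ) : ℝ) / (K : ℝ)) := by
      rw [Finset.sum_neg_distrib, ← Finset.sum_div, hcast]
    rw [e1, neg_mul, neg_le_neg_iff, hb,
      show 1 / (4 * (K : ℝ)) * (t : ℝ) ^ 2 = (t : ℝ) ^ 2 / (4 * K) by ring,
      div_le_div_iff₀ (by positivity) hK0]
    nlinarith [hreal]
  -- Step 2: sum of gaussians bounded by integral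
  have hsum : (∑ t ∈ Finset.Icc 1 N, Real.exp (-b * (t : ℝ) ^ 2)) ≤ Real.sqrt (Real.pi * K) := by
    have anti : AntitoneOn (fun x : ℝ => Real.exp (-b * x ^ 2)) (Set.Icc ((0 : ℕ) : ℝ) ((N : ℕ) : ℝ)) := by
      intro x hx y hy hxy
      simp only
      apply Real.exp_le_exp.2
      have hx0 : (0 : ℝ) ≤ x := by simpa using hx.1
      nlinarith [mul_nonneg hbpos.le (mul_nonneg (sub_nonneg.2 hxy) (show (0:ℝ) ≤ y + x by linarith))]
    have hIco := AntitoneOn.sum_le_integral_Ico (f := fun x : ℝ => Real.exp (-b * x ^ 2))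
      (a := 0) (b := N) (Nat.zero_le N) anti
    simp only [Nat.cast_zero] at hIco
    have hre : (∑ t ∈ Finset.Icc 1 N, Real.exp (-b * (t : ℝ) ^ 2))
        = ∑ i ∈ Finset.Ico 0 N, (fun x : ℝ => Real.exp (-b * x ^ 2)) ((i + 1 : ℕ) : ℝ) := by
      rw [show Finset.Ico 0 N = Finset.range N by rw [Finset.range_eq_Ico],
        ← Finset.Ico_add_one_right_eq_Icc, Finset.sum_Ico_eq_sum_range]
      simp [add_comm]
    rw [hre]
    refine hIco.trans ?_
    have hint : IntegrableOn (fun x : ℝ => Real.exp (-b * x ^ 2)) (Set.Ioi 0) :=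
      (integrable_exp_neg_mul_sq hbpos).integrableOn
    rw [intervalIntegral.integral_of_le (by exact_mod_cast Nat.zero_le N : (0:ℝ) ≤ (N:ℝ))]
    have h2 : (∫ x in Set.Ioc (0 : ℝ) (N : ℝ), Real.exp (-b * x ^ 2))
        ≤ ∫ x in Set.Ioi (0 : ℝ), Real.exp (-b * x ^ 2) := by
      apply setIntegral_mono_set hint
      · filter_upwards with x using (Real.exp_pos _).le
      · exact HasSubset.Subset.eventuallyLE Set.Ioc_subset_Ioi_self
    refine h2.trans ?_
    rw [integral_gaussian_Ioi]
    have : Real.pi / b = 4 * (Real.pi * K) := by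
      rw [hb]; field_simp
    rw [this, show (4 : ℝ) * (Real.pi * K) = 2 ^ 2 * (Real.pi * K) by ring,
      Real.sqrt_mul (by positivity), Real.sqrt_sq (by norm_num)]
    have : (0:ℝ) ≤ Real.sqrt (Real.pi * K) := Real.sqrt_nonneg _
    linarith
  -- combine
  have hfinal : (1 / (K : ℝ)) *
      (∑ t ∈ Finset.Icc 1 N,
        ∏ j ∈ Finset.Icc 1 t, ((K : ℝ) - 1 - ((j / 2 : ℕ) : ℝ)) / (K : ℝ))
      ≤ Real.sqrt (Real.pi / K) := by
    have hle : (∑ t ∈ Finset.Icc 1 N,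
        ∏ j ∈ Finset.Icc 1 t, ((K : ℝ) - 1 - ((j / 2 : ℕ) : ℝ)) / (K : ℝ))
        ≤ Real.sqrt (Real.pi * K) :=
      (Finset.sum_le_sum key).trans hsum
    have heq : Real.sqrt (Real.pi / K) = (1 / (K : ℝ)) * Real.sqrt (Real.pi * K) := by
      rw [show Real.pi / (K : ℝ) = (Real.pi * K) / (K : ℝ) ^ 2 by field_simp,
        Real.sqrt_div (by positivity), Real.sqrt_sq hK0.le, one_div, div_eq_inv_mul]
    rw [heq]
    have : (0 : ℝ) < 1 / (K : ℝ) := by positivity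
    nlinarith [hle]
  linarith
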